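/- If H_β(X) = 0 for some β > 0, then for μ-almost every x, liminf_{n→∞} n^{1/β} d(T^n(x), x) = 0. -/

import Mathlib

open MeasureTheory Filter
open Set
open scoped ENNReal

theorem quantPoincare' {X : Type*} [MeasurableSpace X] (S : X → X) (μ : Measure X)
    [IsProbabilityMeasure μ] (hS : MeasurePreserving S μ μ) {A : Set X}
    (hA : MeasurableSet A) (N : ℕ) :
    μ (A ∩ ⋂ k ∈ Set.Icc 1 N, S^[k] ⁻¹' Aᶜ) ≤ ((N : ℝ≥0∞) + 1)⁻¹ := by
  set E := A ∩ ⋂ k ∈ Set.Icc 1 N, S^[k] ⁻¹' Aᶜ with hEdef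
  have hE : MeasurableSet E := by
    refine hA.inter (MeasurableSet.biInter (Set.to_countable _) fun k _ => ?_)
    exact (hS.measurable.iterate k) hA.compl
  have hnoret : ∀ x ∈ E, ∀ k ∈ Set.Icc 1 N, S^[k] x ∉ A := by
    intro x hx k hk hmem
    exact (Set.mem_iInter₂.1 hx.2 k hk) hmem
  have hdisj : Set.PairwiseDisjoint ↑(Finset.range (N + 1))
      (fun i => S^[i] ⁻¹' E) := by
    intro i hi j hj hij
    wlog hlt : i < j generalizing i j
    · exact (this hj hi hij.symm (by omega)).symm
    simp only [Finset.coe_range, Set.mem_Iio] at hi hj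
    refine Set.disjoint_left.2 fun x hxi hxj => ?_
    have h1 : S^[i] x ∈ E := hxi
    have h2 : S^[j] x ∈ E := hxj
    have heq : S^[j - i] (S^[i] x) = S^[j] x := by
      rw [← Function.iterate_add_apply, Nat.sub_add_cancel hlt.le]
    exact hnoret _ h1 (j - i) ⟨by omega, by omega⟩ (heq ▸ h2.1)
  have hmeas : ∀ i ∈ Finset.range (N + 1), MeasurableSet (S^[i] ⁻¹' E) :=
    fun i _ => (hS.measurable.iterate i) hE
  have hsum : ∑ i ∈ Finset.range (N + 1), μ (S^[i] ⁻¹' E)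
      = μ (⋃ i ∈ Finset.range (N + 1), S^[i] ⁻¹' E) :=
    (measure_biUnion_finset hdisj hmeas).symm
  have hpre : ∀ i, μ (S^[i] ⁻¹' E) = μ E :=
    fun i => (hS.iterate i).measure_preimage hE.nullMeasurableSet
  have hmul : ((N : ℝ≥0∞) + 1) * μ E ≤ 1 := by
    calc ((N : ℝ≥0∞) + 1) * μ E
        = ∑ i ∈ Finset.range (N + 1), μ (S^[i] ⁻¹' E) := by
          simp [hpre, Finset.sum_const, Finset.card_range, mul_comm]
      _ = μ (⋃ i ∈ Finset.range (N + 1), S^[i] ⁻¹' E) := hsum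
      _ ≤ μ Set.univ := measure_mono (Set.subset_univ _)
      _ = 1 := measure_univ
  rw [ENNReal.le_inv_iff_mul_le]
  rwa [mul_comm] at hmul

theorem bad_null' {X : Type*} [MetricSpace X] [MeasurableSpace X] [BorelSpace X]
    (S : X → X) (μ : Measure X) [IsProbabilityMeasure μ] (hS : MeasurePreserving S μ μ)
    {β ε : ℝ} (hβ : 0 < β) (hε : 0 < ε) (h0 : μH[β] (Set.univ : Set X) = 0) :
    μ {x | ∀ k : ℕ, 1 ≤ k → ε < (k : ℝ) ^ (1 / β) * dist (S^[k] x) x} = 0 := by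
  set Bad := {x | ∀ k : ℕ, 1 ≤ k → ε < (k : ℝ) ^ (1 / β) * dist (S^[k] x) x} with hBdef
  set c : ℝ≥0∞ := (ENNReal.ofReal ε) ^ β with hcdef
  have hc0 : c ≠ 0 := by
    simp only [hcdef]
    exact (ENNReal.rpow_pos (by simp [hε]) (by simp)).ne'
  have hctop : c ≠ ⊤ := by
    simp only [hcdef]
    exact ENNReal.rpow_ne_top_of_nonneg hβ.le (by simp)
  -- key estimate for each η > 0
  have key : ∀ η : ℝ≥0∞, 0 < η → μ Bad ≤ η / c := by
    intro η hη
    -- extract a cover from the Hausdorff measure hypothesis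
    have h1 : (⨅ (t : ℕ → Set X) (_ : (Set.univ : Set X) ⊆ ⋃ n, t n)
        (_ : ∀ n, EMetric.diam (t n) ≤ 1),
        ∑' n, ⨆ _ : (t n).Nonempty, EMetric.diam (t n) ^ β) = 0 := by
      refine le_antisymm ?_ zero_le
      have := MeasureTheory.Measure.hausdorffMeasure_apply (X := X) β Set.univ
      calc (⨅ (t : ℕ → Set X) (_ : (Set.univ : Set X) ⊆ ⋃ n, t n)
            (_ : ∀ n, EMetric.diam (t n) ≤ 1),
            ∑' n, ⨆ _ : (t n).Nonempty, EMetric.diam (t n) ^ β)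
          ≤ ⨆ (r : ℝ≥0∞) (_ : 0 < r),
            ⨅ (t : ℕ → Set X) (_ : (Set.univ : Set X) ⊆ ⋃ n, t n)
            (_ : ∀ n, EMetric.diam (t n) ≤ r),
            ∑' n, ⨆ _ : (t n).Nonempty, EMetric.diam (t n) ^ β := by
            exact le_iSup₂ (f := fun (r : ℝ≥0∞) (_ : 0 < r) =>
              ⨅ (t : ℕ → Set X) (_ : (Set.univ : Set X) ⊆ ⋃ n, t n)
              (_ : ∀ n, EMetric.diam (t n) ≤ r),
              ∑' n, ⨆ _ : (t n).Nonempty, EMetric.diam (t n) ^ β) 1 one_pos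
        _ = μH[β] (Set.univ : Set X) := this.symm
        _ = 0 := h0
    have hguard : ∀ s : Set X, (⨆ _ : s.Nonempty, EMetric.diam s ^ β) = EMetric.diam s ^ β := by
      intro s
      rcases s.eq_empty_or_nonempty with rfl | hs
      · simp [EMetric.diam, ENNReal.zero_rpow_of_pos hβ]
      · exact iSup_pos hs
    obtain ⟨t, htcov, htdiam, htsum⟩ : ∃ t : ℕ → Set X, (Set.univ : Set X) ⊆ ⋃ n, t n ∧
        (∀ n, EMetric.diam (t n) ≤ 1) ∧ ∑' n, EMetric.diam (t n) ^ β < η := by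
      by_contra hcon
      push_neg at hcon
      have : η ≤ (⨅ (t : ℕ → Set X) (_ : (Set.univ : Set X) ⊆ ⋃ n, t n)
          (_ : ∀ n, EMetric.diam (t n) ≤ 1),
          ∑' n, ⨆ _ : (t n).Nonempty, EMetric.diam (t n) ^ β) := by
        refine le_iInf fun t => le_iInf fun hc' => le_iInf fun hd => ?_
        simpa [hguard] using hcon t hc' hd
      rw [h1] at this
      exact hη.ne' (le_antisymm this zero_le)
    -- the closed cover
    set A : ℕ → Set X := fun n => closure (t n) with hAdef
    have hAm : ∀ n, MeasurableSet (A n) := fun n => isClosed_closure.measurableSet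
    have hdiamA : ∀ n, EMetric.diam (A n) = EMetric.diam (t n) := fun n => EMetric.diam_closure _
    have hfin : ∀ n, EMetric.diam (t n) ≠ ⊤ :=
      fun n => ne_top_of_le_ne_top ENNReal.one_ne_top (htdiam n)
    -- per-piece estimate
    have hpiece : ∀ n, μ (Bad ∩ A n) ≤ EMetric.diam (t n) ^ β / c := by
      intro n
      set D : ℝ := (EMetric.diam (t n)).toReal with hDdef
      have hD0 : 0 ≤ D := ENNReal.toReal_nonneg
      -- distance bound inside A n
      have hdistle : ∀ y z, y ∈ A n → z ∈ A n → dist y z ≤ D := by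
        intro y z hy hz
        rw [dist_edist]
        refine ENNReal.toReal_mono ((hdiamA n) ▸ hfin n) ?_
        exact le_of_le_of_eq (EMetric.edist_le_diam_of_mem hy hz) (hdiamA n)
      -- subset of the quantitative Poincaré set
      have hsub : ∀ N : ℕ, (N : ℝ) ^ (1 / β) * D ≤ ε →
          Bad ∩ A n ⊆ A n ∩ ⋂ k ∈ Set.Icc 1 N, S^[k] ⁻¹' (A n)ᶜ := by
        intro N hN x hx
        refine ⟨hx.2, Set.mem_iInter₂.2 fun k hk => ?_⟩
        intro hSk
        have hd : dist (S^[k] x) x ≤ D := hdistle _ _ hSk hx.2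
        have h1k : (k : ℝ) ^ (1 / β) ≤ (N : ℝ) ^ (1 / β) :=
          Real.rpow_le_rpow (Nat.cast_nonneg k) (Nat.cast_le.2 hk.2) (by positivity)
        have : ε < (k : ℝ) ^ (1 / β) * dist (S^[k] x) x := hx.1 k hk.1
        have hle : (k : ℝ) ^ (1 / β) * dist (S^[k] x) x ≤ (N : ℝ) ^ (1 / β) * D :=
          mul_le_mul h1k hd dist_nonneg (by positivity)
        linarith
      rcases eq_or_lt_of_le hD0 with hD | hD
      · -- D = 0 : measure is 0
        have hzero : μ (Bad ∩ A n) = 0 := by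
          have hbound : ∀ N : ℕ, μ (Bad ∩ A n) ≤ ((N : ℝ≥0∞))⁻¹ := by
            intro N
            have h1 : (N : ℝ) ^ (1 / β) * D ≤ ε := by
              rw [← hD]; simpa using hε.le
            calc μ (Bad ∩ A n) ≤ ((N : ℝ≥0∞) + 1)⁻¹ :=
                  le_trans (measure_mono (hsub N h1)) (quantPoincare' S μ hS (hAm n) N)
              _ ≤ ((N : ℝ≥0∞))⁻¹ := ENNReal.inv_le_inv.2 (le_self_add)
          have := ge_of_tendsto' ENNReal.tendsto_inv_nat_nhds_zero hbound
          exact le_antisymm this zero_le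
        simp [hzero]
      · -- D > 0
        set N : ℕ := ⌊(ε / D) ^ β⌋₊ with hNdef
        have hdiv0 : 0 < ε / D := div_pos hε hD
        have hNle : (N : ℝ) ≤ (ε / D) ^ β := Nat.floor_le (Real.rpow_nonneg hdiv0.le β)
        have hN1 : (N : ℝ) ^ (1 / β) * D ≤ ε := by
          have h2 : (N : ℝ) ^ (1 / β) ≤ ((ε / D) ^ β) ^ (1 / β) :=
            Real.rpow_le_rpow (Nat.cast_nonneg N) hNle (by positivity)
          have h3 : ((ε / D) ^ β) ^ (1 / β) = ε / D := by
            rw [← Real.rpow_mul hdiv0.le, mul_one_div_cancel hβ.ne', Real.rpow_one]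
          rw [h3] at h2
          calc (N : ℝ) ^ (1 / β) * D ≤ (ε / D) * D :=
              mul_le_mul_of_nonneg_right h2 hD0
            _ = ε := div_mul_cancel₀ ε hD.ne'
        have hstep : μ (Bad ∩ A n) ≤ ((N : ℝ≥0∞) + 1)⁻¹ :=
          le_trans (measure_mono (hsub N hN1)) (quantPoincare' S μ hS (hAm n) N)
        have hlt2 : (ε / D) ^ β < (N : ℝ) + 1 := Nat.lt_floor_add_one _
        have hinv : (((N : ℝ) + 1))⁻¹ ≤ (D / ε) ^ β := by
          have hpos : (0:ℝ) < (ε / D) ^ β := Real.rpow_pos_of_pos hdiv0 β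
          have := inv_anti₀ hpos hlt2.le
          rwa [← Real.inv_rpow hdiv0.le, inv_div] at this
        have hconv : ((N : ℝ≥0∞) + 1)⁻¹ ≤ EMetric.diam (t n) ^ β / c := by
          have e1 : ((N : ℝ≥0∞) + 1)⁻¹ = ENNReal.ofReal (((N : ℝ) + 1)⁻¹) := by
            rw [ENNReal.ofReal_inv_of_pos (by positivity)]
            congr 1
            rw [ENNReal.ofReal_add (Nat.cast_nonneg N) zero_le_one]
            simp
          rw [e1]
          calc ENNReal.ofReal (((N : ℝ) + 1)⁻¹) ≤ ENNReal.ofReal ((D / ε) ^ β) :=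
              ENNReal.ofReal_le_ofReal hinv
            _ = ENNReal.ofReal (D / ε) ^ β := by
              rw [← ENNReal.ofReal_rpow_of_nonneg (by positivity) hβ.le]
            _ = (ENNReal.ofReal D / ENNReal.ofReal ε) ^ β := by
              rw [ENNReal.ofReal_div_of_pos hε]
            _ = ENNReal.ofReal D ^ β / c := by
              rw [ENNReal.div_rpow_of_nonneg _ _ hβ.le]
            _ = EMetric.diam (t n) ^ β / c := by
              rw [hDdef, ENNReal.ofReal_toReal (hfin n)]
        exact hstep.trans hconv
    -- sum up
    calc μ Bad ≤ μ (⋃ n, Bad ∩ A n) := by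
          refine measure_mono fun x hx => ?_
          obtain ⟨n, hn⟩ := Set.mem_iUnion.1 (htcov (Set.mem_univ x))
          exact Set.mem_iUnion.2 ⟨n, hx, subset_closure hn⟩
      _ ≤ ∑' n, μ (Bad ∩ A n) := measure_iUnion_le _
      _ ≤ ∑' n, EMetric.diam (t n) ^ β / c := ENNReal.tsum_le_tsum hpiece
      _ = (∑' n, EMetric.diam (t n) ^ β) / c := by
          simp only [div_eq_mul_inv, ENNReal.tsum_mul_right]
      _ ≤ η / c := ENNReal.div_le_div_right htsum.le c
  -- conclude μ Bad = 0
  refine le_antisymm ?_ zero_le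
  refine ENNReal.le_of_forall_pos_le_add fun δ hδ _ => ?_
  have := key ((δ : ℝ≥0∞) * c)
    (ENNReal.mul_pos (by exact_mod_cast hδ.ne') hc0)
  rw [mul_div_assoc, ENNReal.div_self hc0 hctop, mul_one] at this
  exact le_trans this (by simp)

theorem stmt_15 {X : Type*} [MetricSpace X] [TopologicalSpace.SeparableSpace X]
    [MeasurableSpace X] [BorelSpace X]
    (T : X → X) (hTm : Measurable T) (μ : Measure X) [IsProbabilityMeasure μ]
    (hT : MeasurePreserving T μ μ)
    (β : ℝ) (hβ : 0 < β) (h0 : μH[β] (Set.univ : Set X) = 0) :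
    ∀ᵐ x ∂μ, liminf (fun n : ℕ => (n : ℝ) ^ (1 / β) * dist (T^[n] x) x) atTop = 0 := by
  have key : ∀ m j : ℕ, ∀ᵐ x ∂μ, ∃ N : ℕ, m ≤ N ∧
      (N : ℝ) ^ (1 / β) * dist (T^[N] x) x ≤ 1 / ((j : ℝ) + 1) := by
    intro m j
    have hmpos : (0:ℝ) < ((m:ℝ) + 1) ^ (1 / β) := by positivity
    set ε : ℝ := (1 / ((j : ℝ) + 1)) / ((m:ℝ) + 1) ^ (1 / β) with hεdef
    have hε : 0 < ε := by positivity
    have hnull := bad_null' (T^[m + 1]) μ (hT.iterate (m + 1)) hβ hε h0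
    have : ∀ᵐ x ∂μ, ¬ (∀ k : ℕ, 1 ≤ k →
        ε < (k : ℝ) ^ (1 / β) * dist ((T^[m + 1])^[k] x) x) := by
      rw [ae_iff]; simpa using hnull
    filter_upwards [this] with x hx
    push_neg at hx
    obtain ⟨k, hk1, hkle⟩ := hx
    refine ⟨(m + 1) * k, ?_, ?_⟩
    · calc m ≤ m + 1 := Nat.le_succ m
        _ ≤ (m + 1) * k := Nat.le_mul_of_pos_right _ hk1
    · have hiter : T^[(m + 1) * k] x = (T^[m + 1])^[k] x := by
        rw [Function.iterate_mul]
      have hcast : (((m + 1) * k : ℕ) : ℝ) = ((m:ℝ) + 1) * (k:ℝ) := by push_cast; ring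
      have hrpow : (((m + 1) * k : ℕ) : ℝ) ^ (1 / β)
          = ((m:ℝ) + 1) ^ (1 / β) * (k:ℝ) ^ (1 / β) := by
        rw [hcast, Real.mul_rpow (by positivity) (Nat.cast_nonneg k)]
      rw [hiter, hrpow, mul_assoc]
      calc ((m:ℝ) + 1) ^ (1 / β) * ((k:ℝ) ^ (1 / β) * dist ((T^[m + 1])^[k] x) x)
          ≤ ((m:ℝ) + 1) ^ (1 / β) * ε := by
            exact mul_le_mul_of_nonneg_left hkle hmpos.le
        _ = 1 / ((j : ℝ) + 1) := by
            rw [hεdef, mul_div_cancel₀ _ hmpos.ne']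
  have hae : ∀ᵐ x ∂μ, ∀ m j : ℕ, ∃ N : ℕ, m ≤ N ∧
      (N : ℝ) ^ (1 / β) * dist (T^[N] x) x ≤ 1 / ((j : ℝ) + 1) :=
    ae_all_iff.2 fun m => ae_all_iff.2 fun j => key m j
  filter_upwards [hae] with x hx
  set a : ℕ → ℝ := fun n => (n : ℝ) ^ (1 / β) * dist (T^[n] x) x with hadef
  have hnn : ∀ n, 0 ≤ a n := fun n =>
    mul_nonneg (Real.rpow_nonneg (Nat.cast_nonneg n) _) dist_nonneg
  have hfreq : ∀ j : ℕ, ∃ᶠ n in atTop, a n ≤ 1 / ((j : ℝ) + 1) := by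
    intro j
    rw [frequently_atTop]
    intro m
    obtain ⟨N, hmN, hle⟩ := hx m j
    exact ⟨N, hmN, hle⟩
  have hbdd : IsBoundedUnder (· ≥ ·) atTop a :=
    ⟨0, eventually_map.2 (Eventually.of_forall hnn)⟩
  have hle : ∀ j : ℕ, liminf a atTop ≤ 1 / ((j : ℝ) + 1) := fun j =>
    liminf_le_of_frequently_le (hfreq j) hbdd
  have hcob : IsCoboundedUnder (· ≥ ·) atTop a := by
    refine ⟨1 / ((0:ℝ) + 1), fun b hb => ?_⟩
    have hb' : ∀ᶠ n in atTop, b ≤ a n := eventually_map.1 hb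
    obtain ⟨n, hn1, hn2⟩ := ((hfreq 0).and_eventually hb').exists
    calc b ≤ a n := hn2
      _ ≤ 1 / ((0:ℕ) + 1 : ℝ) := hn1
      _ = 1 / ((0:ℝ) + 1) := by norm_num
  have hge : 0 ≤ liminf a atTop :=
    le_liminf_of_le hcob (Eventually.of_forall hnn)
  have hle0 : liminf a atTop ≤ 0 := by
    have htend : Tendsto (fun j : ℕ => 1 / ((j : ℝ) + 1)) atTop (nhds 0) :=
      tendsto_one_div_add_atTop_nhds_zero_nat
    exact ge_of_tendsto' htend hle
  linarith
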